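/- arXiv:1612.06809 — 3 statements merged into one kernel-verified Lean document; each statement's English description precedes it below -/
import Mathlib

section
/- For any row vector x ∈ C^{1×d}, matrix Y ∈ C^{d×d}, column vector z = e_d (last standard basis vector), and b ≥ 0, the integral ∫_0^b x e^{tY} z dt equals the (1, d+1) entry of e^{b Y^I}, where Y^I is the (d+1)×(d+1) block matrix [[0, x],[0, Y]]. -/
open Matrix intervalIntegral

private theorem pow_fromBlocks' {m n : Type*} [Fintype m] [Fintype n] [DecidableEq m]
    [DecidableEq n] (A : Matrix m m ℂ) (B : Matrix m n ℂ) (D : Matrix n n ℂ) (k : ℕ) :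
    ∃ C, (fromBlocks A B 0 D) ^ k = fromBlocks (A ^ k) C 0 (D ^ k) := by
  induction k with
  | zero => exact ⟨0, by simp [Matrix.fromBlocks_one]⟩
  | succ k ih =>
    obtain ⟨C, hC⟩ := ih
    refine ⟨A ^ k * B + C * D, ?_⟩
    rw [pow_succ, hC, fromBlocks_multiply]
    simp [pow_succ]

private theorem exp_fromBlocks_inr_inr {m n : Type*} [Fintype m] [Fintype n] [DecidableEq m]
    [DecidableEq n] (A : Matrix m m ℂ) (B : Matrix m n ℂ) (D : Matrix n n ℂ) (i j : n) :
    NormedSpace.exp (fromBlocks A B 0 D) (Sum.inr i) (Sum.inr j) = NormedSpace.exp D i j := by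
  letI : NormedRing (Matrix (m ⊕ n) (m ⊕ n) ℂ) := Matrix.linftyOpNormedRing
  letI : NormedAlgebra ℂ (Matrix (m ⊕ n) (m ⊕ n) ℂ) := Matrix.linftyOpNormedAlgebra
  letI : NormedRing (Matrix n n ℂ) := Matrix.linftyOpNormedRing
  letI : NormedAlgebra ℂ (Matrix n n ℂ) := Matrix.linftyOpNormedAlgebra
  have hM : Summable fun k : ℕ => (k.factorial : ℂ)⁻¹ • (fromBlocks A B 0 D) ^ k :=
    NormedSpace.expSeries_summable' (𝕂 := ℂ) _
  have hD : Summable fun k : ℕ => (k.factorial : ℂ)⁻¹ • D ^ k :=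
    NormedSpace.expSeries_summable' (𝕂 := ℂ) _
  simp only [NormedSpace.exp_eq_tsum ℂ]
  erw [tsum_apply hM, tsum_apply (Pi.summable.mp hM (Sum.inr i)),
    tsum_apply hD, tsum_apply (Pi.summable.mp hD i)]
  refine tsum_congr fun k => ?_
  obtain ⟨C, hC⟩ := pow_fromBlocks' A B D k
  rw [hC]
  simp [Matrix.smul_apply]

/-- Integration of a ME-function via matrix augmentation:
`∫_0^b x e^{tY} e_d dt` equals the `(1, d+1)` entry of `e^{b Yᴵ}`
where `Yᴵ = [[0, x],[0, Y]]`. -/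
theorem me_integral_augmentation {d : ℕ}
    (x : Matrix (Fin 1) (Fin (d + 1)) ℂ) (Y : Matrix (Fin (d + 1)) (Fin (d + 1)) ℂ)
    {b : ℝ} (hb : 0 ≤ b) :
    (∫ t in (0 : ℝ)..b, (x * NormedSpace.exp ((t : ℂ) • Y)) 0 (Fin.last d)) =
      NormedSpace.exp ((b : ℂ) • Matrix.fromBlocks (0 : Matrix (Fin 1) (Fin 1) ℂ) x 0 Y)
        (Sum.inl 0) (Sum.inr (Fin.last d)) := by
  letI : NormedRing (Matrix (Fin 1 ⊕ Fin (d + 1)) (Fin 1 ⊕ Fin (d + 1)) ℂ) := Matrix.linftyOpNormedRing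
  letI : NormedAlgebra ℝ (Matrix (Fin 1 ⊕ Fin (d + 1)) (Fin 1 ⊕ Fin (d + 1)) ℂ) := Matrix.linftyOpNormedAlgebra
  letI : NormedRing (Matrix (Fin (d + 1)) (Fin (d + 1)) ℂ) := Matrix.linftyOpNormedRing
  letI : NormedAlgebra ℂ (Matrix (Fin (d + 1)) (Fin (d + 1)) ℂ) := Matrix.linftyOpNormedAlgebra
  set M : Matrix (Fin 1 ⊕ Fin (d + 1)) (Fin 1 ⊕ Fin (d + 1)) ℂ := Matrix.fromBlocks (0 : Matrix (Fin 1) (Fin 1) ℂ) x 0 Y with hM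
  -- real vs complex smul and exp
  have hsmul : ∀ (p q : ℕ) (t : ℝ) (N : Matrix (Fin p) (Fin q) ℂ), (t : ℂ) • N = t • N := by
    intro p q t N
    rw [← algebraMap_smul ℂ t N, Complex.coe_algebraMap]
  have hsmul' : ∀ (t : ℝ) (N : Matrix (Fin 1 ⊕ Fin (d + 1)) (Fin 1 ⊕ Fin (d + 1)) ℂ), (t : ℂ) • N = t • N := by
    intro t N
    rw [← algebraMap_smul ℂ t N, Complex.coe_algebraMap]
  have hexp : (NormedSpace.exp : Matrix (Fin 1 ⊕ Fin (d + 1)) (Fin 1 ⊕ Fin (d + 1)) ℂ → _) = NormedSpace.exp :=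
    rfl
  -- the entry continuous linear map
  let L : Matrix (Fin 1 ⊕ Fin (d + 1)) (Fin 1 ⊕ Fin (d + 1)) ℂ →L[ℝ] ℂ :=
    { toLinearMap :=
        { toFun := fun N => N (Sum.inl 0) (Sum.inr (Fin.last d))
          map_add' := fun _ _ => rfl
          map_smul' := fun _ _ => rfl }
      cont := continuous_id.matrix_elem _ _ }
  -- derivative of the (1, d+1) entry of exp (t • M)
  have key : ∀ t : ℝ,
      HasDerivAt (fun s : ℝ => NormedSpace.exp ((s : ℂ) • M) (Sum.inl 0) (Sum.inr (Fin.last d)))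
        ((x * NormedSpace.exp ((t : ℂ) • Y)) 0 (Fin.last d)) t := by
    intro t
    have hD : HasDerivAt (fun s : ℝ => NormedSpace.exp (s • M))
        (M * NormedSpace.exp (t • M)) t := hasDerivAt_exp_smul_const' M t
    have hD2 : HasDerivAt
        (fun s : ℝ => NormedSpace.exp ((s : ℂ) • M) (Sum.inl 0) (Sum.inr (Fin.last d)))
        (L (M * NormedSpace.exp (t • M))) t := by
      have h := L.hasFDerivAt.comp_hasDerivAt t hD
      exact h.congr_of_eventuallyEq (Filter.Eventually.of_forall fun s =>
        congrArg (fun N => N (Sum.inl 0) (Sum.inr (Fin.last d))) (congrArg NormedSpace.exp (hsmul' s M)))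
    convert hD2 using 1
    -- value of the derivative
    show _ = (M * NormedSpace.exp (t • M)) (Sum.inl 0) (Sum.inr (Fin.last d))
    rw [hexp, ← hsmul']
    conv_rhs => rw [Matrix.mul_apply, Fintype.sum_sum_type]
    have hblock : (t : ℂ) • M = Matrix.fromBlocks 0 ((t : ℂ) • x) 0 ((t : ℂ) • Y) := by
      rw [hM, Matrix.fromBlocks_smul, smul_zero, smul_zero]
    have hentry : ∀ j, NormedSpace.exp ((t : ℂ) • M) (Sum.inr j) (Sum.inr (Fin.last d)) =
        NormedSpace.exp ((t : ℂ) • Y) j (Fin.last d) := by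
      intro j
      rw [hblock, exp_fromBlocks_inr_inr]
    simp only [hM, Matrix.fromBlocks_apply₁₁, Matrix.fromBlocks_apply₁₂, Matrix.zero_apply,
      zero_mul, Finset.sum_const_zero, zero_add, hentry, Matrix.mul_apply]
    simp only [← hM, hentry]
  -- continuity of the integrand
  have hcont : Continuous fun t : ℝ =>
      (x * NormedSpace.exp ((t : ℂ) • Y)) 0 (Fin.last d) := by
    have : Continuous fun t : ℝ => NormedSpace.exp ((t : ℂ) • Y) := by
      letI : NormedAlgebra ℚ (Matrix (Fin (d + 1)) (Fin (d + 1)) ℂ) := Matrix.linftyOpNormedAlgebra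
      exact NormedSpace.exp_continuous.comp
        ((Complex.continuous_ofReal.smul continuous_const))
    exact ((continuous_const.matrix_mul this)).matrix_elem _ _
  have := integral_eq_sub_of_hasDerivAt (f := fun s : ℝ =>
      NormedSpace.exp ((s : ℂ) • M) (Sum.inl 0) (Sum.inr (Fin.last d)))
    (fun t _ => key t) (hcont.intervalIntegrable 0 b)
  rw [this]
  simp only [Complex.ofReal_zero, zero_smul, NormedSpace.exp_zero]
  rw [Matrix.one_apply_ne (by simp)]
  ring
end

section
/- Let f_j(t) = x_j e^{tY_j} z_j, j = 1,2, with all eigenvalues of Y_1 ⊕ Y_2 having negative real part. Then ∫_0^∞ f_1(t) f_2(t) dt = −(x_1 ⊗ x_2)(Y_1 ⊕ Y_2)^{−1}(z_1 ⊗ z_2). -/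
open Matrix MeasureTheory NormedSpace
open scoped Kronecker ENNReal NNReal

attribute [local instance] Matrix.linftyOpNormedAddCommGroup Matrix.linftyOpNormedRing
  Matrix.linftyOpNormedAlgebra

lemma mulVec_exp_of_eigen {n : Type*} [Fintype n] [DecidableEq n]
    (A : Matrix n n ℂ) {v : n → ℂ} {l : ℂ} (h : A.mulVec v = l • v) :
    (exp A).mulVec v = Complex.exp l • v := by
  have hpow : ∀ k : ℕ, (A ^ k).mulVec v = l ^ k • v := by
    intro k
    induction k with
    | zero => simp
    | succ k ih =>
      rw [pow_succ, ← Matrix.mulVec_mulVec, h, Matrix.mulVec_smul, ih, smul_smul, pow_succ, mul_comm]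
  let Φ : Matrix n n ℂ →ₗ[ℂ] (n → ℂ) :=
    { toFun := fun M => M.mulVec v
      map_add' := fun M N => Matrix.add_mulVec M N v
      map_smul' := fun c M => (Matrix.smul_mulVec c M v) }
  let Φc : Matrix n n ℂ →L[ℂ] (n → ℂ) := ⟨Φ, Φ.continuous_of_finiteDimensional⟩
  have hΦ : (exp A).mulVec v = Φc (exp A) := rfl
  rw [hΦ, exp_eq_tsum ℂ, Φc.map_tsum (expSeries_summable' (𝕂 := ℂ) A)]
  have : ∀ k : ℕ, Φc ((Nat.factorial k : ℂ)⁻¹ • A ^ k) = ((Nat.factorial k : ℂ)⁻¹ * l ^ k) • v := by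
    intro k
    show (((Nat.factorial k : ℂ)⁻¹ • A ^ k)).mulVec v = _
    rw [Matrix.smul_mulVec, hpow, smul_smul]
  simp_rw [this]
  rw [Summable.tsum_smul_const]
  · congr 1
    rw [Complex.exp_eq_exp_ℂ, exp_eq_tsum ℂ]
    simp_rw [smul_eq_mul]
  · have := expSeries_summable' (𝕂 := ℂ) (l : ℂ)
    simpa [smul_eq_mul] using this

lemma exists_spectrum_exp {n : Type*} [Fintype n] [DecidableEq n]
    (A : Matrix n n ℂ) {μ : ℂ} (hμ : μ ∈ spectrum ℂ (exp A)) :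
    ∃ l ∈ spectrum ℂ A, μ = Complex.exp l := by
  classical
  set T := (Matrix.toLinAlgEquiv' : Matrix n n ℂ ≃ₐ[ℂ] _)
  have hμ' : Module.End.HasEigenvalue (T (exp A)) μ := by
    rw [Module.End.hasEigenvalue_iff_mem_spectrum, AlgEquiv.spectrum_eq]
    exact hμ
  set E := Module.End.eigenspace (T (exp A)) μ with hEdef
  haveI : Nontrivial E := Submodule.nontrivial_iff_ne_bot.mpr hμ'
  have hcomm : Commute (exp A) A := ((Commute.refl A).exp_left)
  have hinv : ∀ x ∈ E, T A x ∈ E := by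
    intro x hx
    rw [hEdef, Module.End.mem_eigenspace_iff] at hx ⊢
    have : T (exp A) (T A x) = T A (T (exp A) x) := by
      rw [← Module.End.mul_apply, ← Module.End.mul_apply, ← _root_.map_mul, ← _root_.map_mul, hcomm.eq]
    rw [this, hx, _root_.map_smul]
  let f := (T A).restrict hinv
  obtain ⟨l, hl⟩ := Module.End.exists_eigenvalue f
  obtain ⟨⟨v, hvE⟩, hv⟩ := hl.exists_hasEigenvector
  have hv0 : v ≠ 0 := by
    intro h
    exact hv.right (by simp [Submodule.mk_eq_zero, h])
  have hTAv : T A v = l • v := by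
    have h1 := hv.apply_eq_smul
    have := congrArg Subtype.val h1
    simpa [f, LinearMap.restrict_apply] using this
  have hAv : A.mulVec v = l • v := by
    rw [← hTAv]; exact (Matrix.toLinAlgEquiv'_apply A v).symm
  have hexp : (exp A).mulVec v = Complex.exp l • v := mulVec_exp_of_eigen A hAv
  have hvE' : T (exp A) v = μ • v := Module.End.mem_eigenspace_iff.mp hvE
  have hvE'' : (exp A).mulVec v = μ • v := by
    rw [← hvE']; exact (Matrix.toLinAlgEquiv'_apply (exp A) v).symm
  have hμl : μ = Complex.exp l := by
    have h2 : Complex.exp l • v = μ • v := by rw [← hexp, hvE'']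
    have : (Complex.exp l - μ) • v = 0 := by rw [sub_smul, h2, sub_self]
    rcases smul_eq_zero.mp this with h | h
    · exact (sub_eq_zero.mp h).symm
    · exact absurd h hv0
  refine ⟨l, ?_, hμl⟩
  rw [← AlgEquiv.spectrum_eq T, ← Module.End.hasEigenvalue_iff_mem_spectrum]
  exact Module.End.hasEigenvalue_of_hasEigenvector ⟨Module.End.mem_eigenspace_iff.mpr hTAv, hv0⟩

lemma spectralRadius_exp_lt_one {n : Type*} [Fintype n] [DecidableEq n]
    (A : Matrix n n ℂ) (h : ∀ μ ∈ spectrum ℂ A, μ.re < 0) :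
    spectralRadius ℂ (exp A) < 1 := by
  by_cases hne : (spectrum ℂ (exp A)).Nonempty
  · obtain ⟨μ₀, hμ₀⟩ := hne
    obtain ⟨l₀, hl₀, -⟩ := exists_spectrum_exp A hμ₀
    obtain ⟨m, hmA, hmax⟩ := (spectrum.isCompact (a := A)).exists_isMaxOn ⟨l₀, hl₀⟩
      Complex.continuous_re.continuousOn
    have hm : m.re < 0 := h m hmA
    set r : ℝ := Real.exp (m.re / 2) with hrdef
    have hr0 : 0 < r := Real.exp_pos _
    have hr1 : r < 1 := by
      rw [hrdef, Real.exp_lt_one_iff]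
      linarith
    have key : spectralRadius ℂ (exp A) < (r.toNNReal : ℝ≥0∞) := by
      apply spectrum.spectralRadius_lt_of_forall_lt_of_nonempty ⟨μ₀, hμ₀⟩
      intro μ hμ
      obtain ⟨l, hl, rfl⟩ := exists_spectrum_exp A hμ
      have h1 : ‖Complex.exp l‖ = Real.exp l.re := Complex.norm_exp l
      rw [← NNReal.coe_lt_coe, coe_nnnorm, Real.coe_toNNReal _ hr0.le, h1, hrdef]
      have : l.re ≤ m.re := hmax hl
      have : l.re < m.re / 2 := by
        have := h l hl
        have := h m hmA
        linarith [hmax hl]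
      exact Real.exp_lt_exp.mpr this
    refine key.trans_le ?_
    rw [show (1 : ℝ≥0∞) = ((1 : ℝ≥0) : ℝ≥0∞) from rfl, ENNReal.coe_le_coe]
    rw [← NNReal.coe_le_coe, Real.coe_toNNReal _ hr0.le]
    exact hr1.le
  · have hempty : spectrum ℂ (exp A) = ∅ := Set.not_nonempty_iff_eq_empty.mp hne
    rw [spectralRadius, hempty]
    simpa using zero_lt_one

lemma exp_matrix_decay {n : Type*} [Fintype n] [DecidableEq n]
    (A : Matrix n n ℂ) (h : ∀ μ ∈ spectrum ℂ A, μ.re < 0) :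
    ∃ C ε : ℝ, 0 < ε ∧ ∀ t : ℝ, 0 ≤ t → ‖exp ((t : ℂ) • A)‖ ≤ C * Real.exp (-ε * t) := by
  set B := exp A with hBdef
  have hρ : spectralRadius ℂ B < 1 := spectralRadius_exp_lt_one A h
  obtain ⟨r, hρr, hr1⟩ := ENNReal.lt_iff_exists_nnreal_btwn.mp hρ
  have hr1' : r < 1 := by exact_mod_cast hr1
  have hr0 : 0 < r := by
    rcases eq_or_lt_of_le (zero_le : (0 : ℝ≥0) ≤ r) with h0 | h0
    · exfalso
      rw [← h0] at hρr
      simpa using lt_of_le_of_lt zero_le hρr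
    · exact h0
  -- Gelfand: eventually ‖B^n‖ < r^n
  have hgel := spectrum.pow_nnnorm_pow_one_div_tendsto_nhds_spectralRadius B
  have hev : ∀ᶠ k : ℕ in Filter.atTop, (‖B ^ k‖₊ : ℝ≥0∞) ^ (1 / (k : ℝ)) < (r : ℝ≥0∞) :=
    hgel.eventually_lt_const hρr
  obtain ⟨N, hN⟩ := (hev.and (Filter.eventually_ge_atTop 1)).exists_forall_of_atTop
  have hBn : ∀ k, N ≤ k → ‖B ^ k‖ ≤ (r : ℝ) ^ k := by
    intro k hk
    obtain ⟨h1, h2⟩ := hN k hk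
    have hk0 : (k : ℝ) ≠ 0 := Nat.cast_ne_zero.mpr (by omega)
    have h1' : ‖B ^ k‖₊ ^ ((1 : ℝ) / (k : ℝ)) < r := by
      rw [← ENNReal.coe_lt_coe, ENNReal.coe_rpow_of_nonneg _ (by positivity)]
      exact h1
    have hnn : ‖B ^ k‖₊ ≤ r ^ k := by
      calc ‖B ^ k‖₊ = (‖B ^ k‖₊ ^ ((1 : ℝ) / (k : ℝ))) ^ (k : ℕ) := by
            rw [← NNReal.rpow_natCast (‖B ^ k‖₊ ^ ((1 : ℝ) / (k : ℝ))) k, ← NNReal.rpow_mul,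
              one_div, inv_mul_cancel₀ hk0, NNReal.rpow_one]
        _ ≤ r ^ k := pow_le_pow_left₀ zero_le h1'.le k
    calc ‖B ^ k‖ = ((‖B ^ k‖₊ : ℝ)) := (coe_nnnorm _).symm
      _ ≤ ((r ^ k : ℝ≥0) : ℝ) := NNReal.coe_le_coe.mpr hnn
      _ = (r : ℝ) ^ k := by push_cast; ring
  -- uniform constant
  set rr : ℝ := (r : ℝ) with hrrdef
  have hrr0 : 0 < rr := hr0
  have hrr1 : rr < 1 := hr1'
  set C₂ : ℝ := 1 + ∑ j ∈ Finset.range N, ‖B ^ j‖ / rr ^ j with hC₂def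
  have hC₂1 : 1 ≤ C₂ := by
    rw [hC₂def]
    have : 0 ≤ ∑ j ∈ Finset.range N, ‖B ^ j‖ / rr ^ j :=
      Finset.sum_nonneg fun j _ => by positivity
    linarith
  have hC₂ : ∀ k : ℕ, ‖B ^ k‖ ≤ C₂ * rr ^ k := by
    intro k
    rcases le_or_gt N k with hk | hk
    · calc ‖B ^ k‖ ≤ rr ^ k := hBn k hk
        _ ≤ C₂ * rr ^ k := le_mul_of_one_le_left (by positivity) hC₂1
    · have hmem : k ∈ Finset.range N := Finset.mem_range.mpr hk
      have h1 : ‖B ^ k‖ / rr ^ k ≤ ∑ j ∈ Finset.range N, ‖B ^ j‖ / rr ^ j :=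
        Finset.single_le_sum (f := fun j => ‖B ^ j‖ / rr ^ j) (fun j _ => by positivity) hmem
      have h2 : ‖B ^ k‖ / rr ^ k ≤ C₂ := by rw [hC₂def]; linarith
      calc ‖B ^ k‖ = (‖B ^ k‖ / rr ^ k) * rr ^ k := by field_simp
        _ ≤ C₂ * rr ^ k := mul_le_mul_of_nonneg_right h2 (by positivity)
  -- bound on [0,1]
  obtain ⟨C₁, hC₁⟩ := (isCompact_Icc (a := (0:ℝ)) (b := 1)).exists_bound_of_continuousOn
    (f := fun s : ℝ => exp (s • A))
    ((exp_continuous.comp (continuous_id.smul continuous_const)).continuousOn)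
  have hC₁0 : 0 ≤ C₁ := le_trans (norm_nonneg _) (hC₁ 0 ⟨le_refl _, zero_le_one⟩)
  have hlog : Real.log rr < 0 := Real.log_neg hrr0 hrr1
  refine ⟨C₂ * C₁ / rr, -Real.log rr, neg_pos.mpr hlog, ?_⟩
  intro t ht
  set k : ℕ := ⌊t⌋₊ with hkdef
  have hk_le : (k : ℝ) ≤ t := Nat.floor_le ht
  have ht_lt : t < (k : ℝ) + 1 := Nat.lt_floor_add_one t
  have hsmul : ((t : ℂ)) • A = t • A := by
    rw [← Complex.coe_algebraMap, algebraMap_smul]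
  have hsplit : t • A = ((k : ℝ)) • A + (t - (k : ℝ)) • A := by
    rw [← add_smul]; ring_nf
  have hexp1 : exp (((k : ℝ)) • A) = B ^ k := by
    rw [Nat.cast_smul_eq_nsmul, Matrix.exp_nsmul]
  have hcomm : Commute (((k : ℝ)) • A) ((t - (k : ℝ)) • A) :=
    ((Commute.refl A).smul_left _).smul_right _
  have hnorm2 : ‖exp ((t - (k : ℝ)) • A)‖ ≤ C₁ :=
    hC₁ _ ⟨by linarith, by linarith⟩
  have hrrk : rr ^ k ≤ Real.exp (-(-Real.log rr) * t) / rr := by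
    have h1 : rr ^ k = Real.exp ((k : ℝ) * Real.log rr) := by
      rw [Real.exp_nat_mul, Real.exp_log hrr0]
    have h2 : (k : ℝ) * Real.log rr ≤ (t - 1) * Real.log rr := by
      apply mul_le_mul_of_nonpos_right _ hlog.le
      linarith
    rw [h1]
    calc Real.exp ((k : ℝ) * Real.log rr) ≤ Real.exp ((t - 1) * Real.log rr) :=
          Real.exp_le_exp.mpr h2
      _ = Real.exp (-(-Real.log rr) * t) / rr := by
          rw [neg_neg, show (t - 1) * Real.log rr = Real.log rr * t - Real.log rr by ring,
            Real.exp_sub, Real.exp_log hrr0, mul_comm]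
  calc ‖exp ((t : ℂ) • A)‖ = ‖B ^ k * exp ((t - (k : ℝ)) • A)‖ := by
        rw [hsmul, hsplit, Matrix.exp_add_of_commute _ _ hcomm, hexp1]
    _ ≤ ‖B ^ k‖ * ‖exp ((t - (k : ℝ)) • A)‖ := norm_mul_le _ _
    _ ≤ (C₂ * rr ^ k) * C₁ := by
        apply mul_le_mul (hC₂ k) hnorm2 (norm_nonneg _)
        positivity
    _ ≤ (C₂ * (Real.exp (-(-Real.log rr) * t) / rr)) * C₁ := by
        have := mul_le_mul_of_nonneg_left hrrk (by linarith : (0:ℝ) ≤ C₂)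
        exact mul_le_mul_of_nonneg_right this hC₁0
    _ = C₂ * C₁ / rr * Real.exp (-(-Real.log rr) * t) := by ring


/-- `M ↦ M ⊗ₖ 1` as an algebra hom. -/
noncomputable def kronLeftAlgHom (d₁ d₂ : ℕ) :
    Matrix (Fin d₁) (Fin d₁) ℂ →ₐ[ℂ] Matrix (Fin d₁ × Fin d₂) (Fin d₁ × Fin d₂) ℂ where
  toFun M := M ⊗ₖ (1 : Matrix (Fin d₂) (Fin d₂) ℂ)
  map_one' := Matrix.one_kronecker_one
  map_mul' M N := by rw [← Matrix.mul_kronecker_mul, one_mul]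
  map_zero' := Matrix.zero_kronecker _
  map_add' M N := Matrix.add_kronecker M N _
  commutes' c := by
    rw [Algebra.algebraMap_eq_smul_one, Algebra.algebraMap_eq_smul_one]
    show (c • (1 : Matrix (Fin d₁) (Fin d₁) ℂ)) ⊗ₖ (1 : Matrix (Fin d₂) (Fin d₂) ℂ) = _
    rw [Matrix.smul_kronecker, Matrix.one_kronecker_one]

/-- `M ↦ 1 ⊗ₖ M` as an algebra hom. -/
noncomputable def kronRightAlgHom (d₁ d₂ : ℕ) :
    Matrix (Fin d₂) (Fin d₂) ℂ →ₐ[ℂ] Matrix (Fin d₁ × Fin d₂) (Fin d₁ × Fin d₂) ℂ where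
  toFun M := (1 : Matrix (Fin d₁) (Fin d₁) ℂ) ⊗ₖ M
  map_one' := Matrix.one_kronecker_one
  map_mul' M N := by rw [← Matrix.mul_kronecker_mul, one_mul]
  map_zero' := Matrix.kronecker_zero _
  map_add' M N := Matrix.kronecker_add _ M N
  commutes' c := by
    rw [Algebra.algebraMap_eq_smul_one, Algebra.algebraMap_eq_smul_one]
    show (1 : Matrix (Fin d₁) (Fin d₁) ℂ) ⊗ₖ (c • (1 : Matrix (Fin d₂) (Fin d₂) ℂ)) = _
    rw [Matrix.kronecker_smul, Matrix.one_kronecker_one]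

lemma exp_kronecker_sum {d₁ d₂ : ℕ} (Y₁ : Matrix (Fin d₁) (Fin d₁) ℂ)
    (Y₂ : Matrix (Fin d₂) (Fin d₂) ℂ) (s : ℂ) :
    exp (s • Y₁) ⊗ₖ exp (s • Y₂) =
      exp (s • (Y₁ ⊗ₖ (1 : Matrix (Fin d₂) (Fin d₂) ℂ) +
        (1 : Matrix (Fin d₁) (Fin d₁) ℂ) ⊗ₖ Y₂)) := by
  have hL : Continuous (kronLeftAlgHom d₁ d₂) :=
    (kronLeftAlgHom d₁ d₂).toLinearMap.continuous_of_finiteDimensional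
  have hR : Continuous (kronRightAlgHom d₁ d₂) :=
    (kronRightAlgHom d₁ d₂).toLinearMap.continuous_of_finiteDimensional
  have hcomm : Commute (s • (Y₁ ⊗ₖ (1 : Matrix (Fin d₂) (Fin d₂) ℂ)))
      (s • ((1 : Matrix (Fin d₁) (Fin d₁) ℂ) ⊗ₖ Y₂)) := by
    apply Commute.smul_left
    apply Commute.smul_right
    show _ * _ = _ * _
    rw [← Matrix.mul_kronecker_mul, ← Matrix.mul_kronecker_mul, one_mul, mul_one, one_mul, mul_one]
  have h1 : exp (s • (Y₁ ⊗ₖ (1 : Matrix (Fin d₂) (Fin d₂) ℂ))) =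
      exp (s • Y₁) ⊗ₖ (1 : Matrix (Fin d₂) (Fin d₂) ℂ) := by
    have hmap := map_exp (kronLeftAlgHom d₁ d₂) hL (s • Y₁)
    have harg : (kronLeftAlgHom d₁ d₂) (s • Y₁) = s • (Y₁ ⊗ₖ (1 : Matrix (Fin d₂) (Fin d₂) ℂ)) :=
      Matrix.smul_kronecker s Y₁ 1
    rw [← harg]
    exact hmap.symm
  have h2 : exp (s • ((1 : Matrix (Fin d₁) (Fin d₁) ℂ) ⊗ₖ Y₂)) =
      (1 : Matrix (Fin d₁) (Fin d₁) ℂ) ⊗ₖ exp (s • Y₂) := by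
    have hmap := map_exp (kronRightAlgHom d₁ d₂) hR (s • Y₂)
    have harg : (kronRightAlgHom d₁ d₂) (s • Y₂) = s • ((1 : Matrix (Fin d₁) (Fin d₁) ℂ) ⊗ₖ Y₂) :=
      Matrix.kronecker_smul s 1 Y₂
    rw [← harg]
    exact hmap.symm
  rw [smul_add, Matrix.exp_add_of_commute _ _ hcomm, h1, h2, ← Matrix.mul_kronecker_mul, mul_one, one_mul]

/-- Integral of the product of two ME-densities:
`∫_0^∞ f₁(t) f₂(t) dt = -(x₁ ⊗ x₂)(Y₁ ⊕ Y₂)⁻¹(z₁ ⊗ z₂)`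
when the Kronecker sum `Y₁ ⊕ Y₂` is Hurwitz. -/
theorem integral_product_me_densities {d₁ d₂ : ℕ}
    (x₁ : Matrix (Fin 1) (Fin d₁) ℂ) (Y₁ : Matrix (Fin d₁) (Fin d₁) ℂ)
    (z₁ : Matrix (Fin d₁) (Fin 1) ℂ)
    (x₂ : Matrix (Fin 1) (Fin d₂) ℂ) (Y₂ : Matrix (Fin d₂) (Fin d₂) ℂ)
    (z₂ : Matrix (Fin d₂) (Fin 1) ℂ)
    (hspec : ∀ μ ∈ spectrum ℂ
      (Y₁ ⊗ₖ (1 : Matrix (Fin d₂) (Fin d₂) ℂ) + (1 : Matrix (Fin d₁) (Fin d₁) ℂ) ⊗ₖ Y₂),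
      μ.re < 0) :
    (∫ t in Set.Ioi (0 : ℝ),
        (x₁ * NormedSpace.exp ((t : ℂ) • Y₁) * z₁) 0 0 *
          (x₂ * NormedSpace.exp ((t : ℂ) • Y₂) * z₂) 0 0) =
      -(((x₁ ⊗ₖ x₂) *
          (Y₁ ⊗ₖ (1 : Matrix (Fin d₂) (Fin d₂) ℂ) +
            (1 : Matrix (Fin d₁) (Fin d₁) ℂ) ⊗ₖ Y₂)⁻¹ *
          (z₁ ⊗ₖ z₂)) (0, 0) (0, 0)) := by
  classical
  set A : Matrix (Fin d₁ × Fin d₂) (Fin d₁ × Fin d₂) ℂ :=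
    Y₁ ⊗ₖ (1 : Matrix (Fin d₂) (Fin d₂) ℂ) + (1 : Matrix (Fin d₁) (Fin d₁) ℂ) ⊗ₖ Y₂ with hAdef
  have hA : IsUnit A := by
    by_contra hA
    have := hspec 0 ((spectrum.zero_mem_iff (R := ℂ)).mpr hA)
    simp at this
  have hdet : IsUnit A.det := (Matrix.isUnit_iff_isUnit_det A).mp hA
  have hAinv : A * A⁻¹ = 1 := Matrix.mul_nonsing_inv A hdet
  set w : Matrix (Fin d₁ × Fin d₂) (Fin 1 × Fin 1) ℂ := A⁻¹ * (z₁ ⊗ₖ z₂) with hwdef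
  let Llin : Matrix (Fin d₁ × Fin d₂) (Fin d₁ × Fin d₂) ℂ →ₗ[ℂ] ℂ :=
    { toFun := fun M => ((x₁ ⊗ₖ x₂) * M * w) (0, 0) (0, 0)
      map_add' := fun M N => by simp [Matrix.mul_add, Matrix.add_mul, Matrix.add_apply]
      map_smul' := fun r M => by
        simp [Matrix.mul_smul, Matrix.smul_mul, Matrix.smul_apply, smul_eq_mul] }
  let L : @ContinuousLinearMap ℂ ℂ _ _ (RingHom.id ℂ) (Matrix (Fin d₁ × Fin d₂) (Fin d₁ × Fin d₂) ℂ)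
      (Matrix.linftyOpNormedAddCommGroup (m := Fin d₁ × Fin d₂) (n := Fin d₁ × Fin d₂)
        (α := ℂ)).toUniformSpace.toTopologicalSpace _ ℂ _ _ _ _ :=
    ⟨Llin, Llin.continuous_of_finiteDimensional⟩
  obtain ⟨C, ε, hε, hC⟩ := exp_matrix_decay A hspec
  have hderiv : ∀ t : ℝ, HasDerivAt (fun u : ℝ => L (exp ((u : ℂ) • A)))
      (L (exp ((t : ℂ) • A) * A)) t := by
    intro t
    have h1 : HasDerivAt (fun u : ℂ => L (exp (u • A)))
        (L (exp (((t : ℝ) : ℂ) • A) * A)) ((t : ℝ) : ℂ) :=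
      L.hasFDerivAt.comp_hasDerivAt _ (hasDerivAt_exp_smul_const A ((t : ℝ) : ℂ))
    exact h1.comp_ofReal
  have hcontexp : Continuous fun t : ℝ => exp ((t : ℂ) • A) :=
    exp_continuous.comp (Complex.continuous_ofReal.smul continuous_const)
  have hg_cont : Continuous fun t : ℝ => L (exp ((t : ℂ) • A)) :=
    L.continuous.comp hcontexp
  have hεatTop : Filter.Tendsto (fun t : ℝ => Real.exp (-ε * t)) Filter.atTop (nhds 0) := by
    have h1 : Filter.Tendsto (fun t : ℝ => ε * t) Filter.atTop Filter.atTop :=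
      Filter.Tendsto.const_mul_atTop hε Filter.tendsto_id
    have h2 := Real.tendsto_exp_neg_atTop_nhds_zero.comp h1
    exact h2.congr fun t => by simp [Function.comp, neg_mul]
  have htend : Filter.Tendsto (fun t : ℝ => L (exp ((t : ℂ) • A))) Filter.atTop (nhds 0) := by
    have hb : ∀ᶠ t : ℝ in Filter.atTop,
        ‖L (exp ((t : ℂ) • A))‖ ≤ ‖L‖ * (C * Real.exp (-ε * t)) := by
      filter_upwards [Filter.eventually_ge_atTop (0 : ℝ)] with t ht
      calc ‖L (exp ((t : ℂ) • A))‖ ≤ ‖L‖ * ‖exp ((t : ℂ) • A)‖ := L.le_opNorm _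
        _ ≤ ‖L‖ * (C * Real.exp (-ε * t)) :=
            mul_le_mul_of_nonneg_left (hC t ht) (norm_nonneg _)
    have hg0 : Filter.Tendsto (fun t : ℝ => ‖L‖ * (C * Real.exp (-ε * t)))
        Filter.atTop (nhds 0) := by
      have := (hεatTop.const_mul C).const_mul ‖L‖
      simpa using this
    exact squeeze_zero_norm' hb hg0
  set c : ℝ → ℂ := fun t => L (exp ((t : ℂ) • A) * A) with hcdef
  have hcont_c : Continuous c := L.continuous.comp (hcontexp.mul continuous_const)
  have hint : IntegrableOn c (Set.Ioi (0 : ℝ)) := by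
    apply Integrable.mono' (g := fun t => (‖L‖ * ‖A‖ * C) * Real.exp (-ε * t))
    · exact (exp_neg_integrableOn_Ioi 0 hε).const_mul _
    · exact hcont_c.aestronglyMeasurable.restrict
    · rw [ae_restrict_iff' measurableSet_Ioi]
      apply ae_of_all
      intro t ht
      calc ‖c t‖ ≤ ‖L‖ * ‖exp ((t : ℂ) • A) * A‖ := L.le_opNorm _
        _ ≤ ‖L‖ * (‖exp ((t : ℂ) • A)‖ * ‖A‖) :=
            mul_le_mul_of_nonneg_left (norm_mul_le _ _) (norm_nonneg _)
        _ ≤ ‖L‖ * ((C * Real.exp (-ε * t)) * ‖A‖) := by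
            apply mul_le_mul_of_nonneg_left _ (norm_nonneg (L : _ →L[ℂ] ℂ))
            exact mul_le_mul_of_nonneg_right (hC t (le_of_lt ht)) (norm_nonneg _)
        _ = ‖L‖ * ‖A‖ * C * Real.exp (-ε * t) := by ring
  have hFTC := integral_Ioi_of_hasDerivAt_of_tendsto
      (f := fun t : ℝ => L (exp ((t : ℂ) • A))) (f' := c) (a := 0) (m := 0)
      hg_cont.continuousWithinAt (fun t _ => hderiv t) hint htend
  have hintegrand : (fun t : ℝ => (x₁ * exp ((t : ℂ) • Y₁) * z₁) 0 0 *
      (x₂ * exp ((t : ℂ) • Y₂) * z₂) 0 0) = c := by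
    funext t
    have hk : (x₁ * exp ((t : ℂ) • Y₁) * z₁) 0 0 * (x₂ * exp ((t : ℂ) • Y₂) * z₂) 0 0
        = ((x₁ * exp ((t : ℂ) • Y₁) * z₁) ⊗ₖ (x₂ * exp ((t : ℂ) • Y₂) * z₂))
          (0, 0) (0, 0) := rfl
    have hmat : (x₁ ⊗ₖ x₂) * (exp ((t : ℂ) • A) * A) * w
        = (x₁ ⊗ₖ x₂) * exp ((t : ℂ) • A) * (z₁ ⊗ₖ z₂) := by
      rw [hwdef]
      simp only [Matrix.mul_assoc]
      rw [← Matrix.mul_assoc A A⁻¹, hAinv, Matrix.one_mul]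
    rw [hk, Matrix.mul_kronecker_mul, Matrix.mul_kronecker_mul, exp_kronecker_sum]
    show ((x₁ ⊗ₖ x₂) * exp ((t : ℂ) • A) * (z₁ ⊗ₖ z₂)) (0, 0) (0, 0)
       = ((x₁ ⊗ₖ x₂) * (exp ((t : ℂ) • A) * A) * w) (0, 0) (0, 0)
    rw [hmat]
  have hL0 : L (exp ((((0 : ℝ)) : ℂ) • A)) = ((x₁ ⊗ₖ x₂) * A⁻¹ * (z₁ ⊗ₖ z₂)) (0, 0) (0, 0) := by
    rw [show (((0 : ℝ)) : ℂ) • A = 0 by simp, exp_zero]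
    show ((x₁ ⊗ₖ x₂) * (1 : Matrix (Fin d₁ × Fin d₂) (Fin d₁ × Fin d₂) ℂ) * w) (0, 0) (0, 0) = _
    rw [Matrix.mul_one, hwdef, ← Matrix.mul_assoc]
  have h00 : (fun t : ℝ => L (exp ((t : ℂ) • A))) 0
      = ((x₁ ⊗ₖ x₂) * A⁻¹ * (z₁ ⊗ₖ z₂)) (0, 0) (0, 0) := hL0
  rw [hintegrand, hFTC, hL0, zero_sub]
end

section
/- Let T_1, T_2 be independent random variables with pdfs f_j(t) = x_j e^{tY_j} z_j on [0,∞), and let Y_j^I = [[0, x_j],[0, Y_j]]. Then the cdf of max(T_1, T_2) at t equals the (1, d_1^I + d_2^I) entry of e^{t (Y_1^I ⊕ Y_2^I)}, where d_j^I = d_j + 1; equivalently it equals the product (e^{t Y_1^I})_{1,d_1^I} · (e^{t Y_2^I})_{1,d_2^I}. -/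
open Matrix MeasureTheory intervalIntegral
open scoped Kronecker ProbabilityTheory

open NormedSpace

namespace MEAux

attribute [local instance] Matrix.linftyOpNormedRing Matrix.linftyOpNormedAlgebra

variable {m : Type*} [Fintype m] [DecidableEq m]

lemma powB (x : Matrix (Fin 1) m ℝ) (Y : Matrix m m ℝ) (n : ℕ) :
    (fromBlocks (0 : Matrix (Fin 1) (Fin 1) ℝ) x 0 Y) ^ (n+1)
      = fromBlocks 0 (x * Y ^ n) 0 (Y ^ (n+1)) := by
  induction n with
  | zero => simp [Matrix.fromBlocks_multiply]
  | succ n ih =>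
      rw [pow_succ, ih, Matrix.fromBlocks_multiply]
      simp only [Matrix.mul_zero, Matrix.zero_mul, add_zero, zero_add]
      rw [Matrix.mul_assoc, ← pow_succ, ← pow_succ]

noncomputable def entryL (n : Type*) [Fintype n] (i j : n) :
    Matrix n n ℝ →L[ℝ] ℝ :=
  LinearMap.toContinuousLinearMap
    { toFun := fun M => M i j
      map_add' := fun _ _ => rfl
      map_smul' := fun _ _ => rfl }

@[simp] lemma entryL_apply (n : Type*) [Fintype n] (i j : n)
    (M : Matrix n n ℝ) : entryL n i j M = M i j := rfl

lemma exp_apply_eq_tsum {n : Type*} [Fintype n] [DecidableEq n]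
    (A : Matrix n n ℝ) (i j : n) :
    exp A i j = ∑' k : ℕ, ((k.factorial : ℝ))⁻¹ • (A ^ k) i j := by
  have h := expSeries_summable' (𝕂 := ℝ) A
  calc exp A i j = entryL n i j (∑' k : ℕ, ((k.factorial : ℝ))⁻¹ • A ^ k) := by
        rw [exp_eq_tsum ℝ]; rfl
    _ = ∑' k : ℕ, entryL n i j (((k.factorial : ℝ))⁻¹ • A ^ k) :=
        (entryL n i j).map_tsum h
    _ = ∑' k : ℕ, ((k.factorial : ℝ))⁻¹ • (A ^ k) i j := tsum_congr fun k => rfl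

lemma exp_fromBlocks_rr (x : Matrix (Fin 1) m ℝ) (Y : Matrix m m ℝ) (i j : m) :
    exp (fromBlocks (0 : Matrix (Fin 1) (Fin 1) ℝ) x 0 Y) (Sum.inr i) (Sum.inr j)
      = exp Y i j := by
  rw [exp_apply_eq_tsum, exp_apply_eq_tsum]
  refine tsum_congr fun k => ?_
  cases k with
  | zero => simp [Matrix.one_apply]
  | succ k => rw [powB]; simp

lemma hasDeriv_entry (x : Matrix (Fin 1) m ℝ) (Y : Matrix m m ℝ) (j : m) (u : ℝ) :
    HasDerivAt
      (fun s : ℝ => exp (s • fromBlocks (0 : Matrix (Fin 1) (Fin 1) ℝ) x 0 Y)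
        (Sum.inl 0) (Sum.inr j))
      ((x * exp (u • Y)) 0 j) u := by
  have key : ∀ i : m, exp (u • fromBlocks (0 : Matrix (Fin 1) (Fin 1) ℝ) x 0 Y)
      (Sum.inr i) (Sum.inr j) = exp (u • Y) i j := by
    intro i
    rw [Matrix.fromBlocks_smul, smul_zero, smul_zero, exp_fromBlocks_rr]
  have h := hasDerivAt_exp_smul_const' (𝕂 := ℝ)
    (fromBlocks (0 : Matrix (Fin 1) (Fin 1) ℝ) x 0 Y) u
  have h2 := (entryL _ (Sum.inl (0 : Fin 1)) (Sum.inr j)).hasFDerivAt.comp_hasDerivAt u h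
  refine h2.congr_deriv ?_
  erw [entryL_apply]
  rw [Matrix.mul_apply, Matrix.mul_apply, Fintype.sum_sum_type]
  simp only [Matrix.fromBlocks_apply₁₁, Matrix.fromBlocks_apply₁₂, Matrix.zero_apply,
    zero_mul, Finset.sum_const_zero, zero_add, key]
  exact Finset.sum_congr rfl fun i _ => congrArg _ (key i)

lemma integral_eq (x : Matrix (Fin 1) m ℝ) (Y : Matrix m m ℝ) (j : m) (t : ℝ) :
    ∫ u in (0:ℝ)..t, (x * exp (u • Y)) 0 j
      = exp (t • fromBlocks (0 : Matrix (Fin 1) (Fin 1) ℝ) x 0 Y)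
          (Sum.inl 0) (Sum.inr j) := by
  have hcont : Continuous fun u : ℝ => (x * exp (u • Y)) 0 j := by
    have h1 : Continuous fun u : ℝ => exp (u • Y) :=
      exp_continuous.comp (continuous_id.smul continuous_const)
    exact (continuous_const.matrix_mul h1).matrix_elem 0 j
  have h := intervalIntegral.integral_eq_sub_of_hasDerivAt
    (f := fun s : ℝ => exp (s • fromBlocks (0 : Matrix (Fin 1) (Fin 1) ℝ) x 0 Y)
      (Sum.inl 0) (Sum.inr j))
    (fun u _ => hasDeriv_entry x Y j u) (hcont.intervalIntegrable 0 t)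
  have h0 : exp ((0:ℝ) • fromBlocks (0 : Matrix (Fin 1) (Fin 1) ℝ) x 0 Y)
      (Sum.inl (0 : Fin 1)) (Sum.inr j) = 0 := by
    rw [zero_smul, exp_zero]; simp [Matrix.one_apply]
  rw [h]
  simp only [h0, sub_zero]

variable {n p : Type*} [Fintype n] [DecidableEq n] [Fintype p] [DecidableEq p]

noncomputable def kronRight (n p : Type*) [Fintype n] [DecidableEq n] [Fintype p] [DecidableEq p] :
    Matrix n n ℝ →ₐ[ℝ] Matrix (n × p) (n × p) ℝ where
  toFun A := A ⊗ₖ (1 : Matrix p p ℝ)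
  map_one' := Matrix.one_kronecker_one
  map_mul' A B := by rw [← Matrix.mul_kronecker_mul, Matrix.one_mul]
  map_zero' := Matrix.zero_kronecker _
  map_add' A B := Matrix.add_kronecker A B 1
  commutes' r := by
    show Matrix.kroneckerMap (· * ·) ((algebraMap ℝ (Matrix n n ℝ)) r) (1 : Matrix p p ℝ)
      = algebraMap ℝ _ r
    rw [Algebra.algebraMap_eq_smul_one, Algebra.algebraMap_eq_smul_one,
      Matrix.smul_kronecker, Matrix.one_kronecker_one]

noncomputable def kronLeft (n p : Type*) [Fintype n] [DecidableEq n] [Fintype p] [DecidableEq p] :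
    Matrix p p ℝ →ₐ[ℝ] Matrix (n × p) (n × p) ℝ where
  toFun B := (1 : Matrix n n ℝ) ⊗ₖ B
  map_one' := Matrix.one_kronecker_one
  map_mul' A B := by rw [← Matrix.mul_kronecker_mul, Matrix.one_mul]
  map_zero' := Matrix.kronecker_zero _
  map_add' A B := Matrix.kronecker_add 1 A B
  commutes' r := by
    show Matrix.kroneckerMap (· * ·) (1 : Matrix n n ℝ) ((algebraMap ℝ (Matrix p p ℝ)) r)
      = algebraMap ℝ _ r
    rw [Algebra.algebraMap_eq_smul_one, Algebra.algebraMap_eq_smul_one,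
      Matrix.kronecker_smul, Matrix.one_kronecker_one]

lemma exp_kron_sum (A : Matrix n n ℝ) (B : Matrix p p ℝ) :
    exp (A ⊗ₖ (1 : Matrix p p ℝ) + (1 : Matrix n n ℝ) ⊗ₖ B)
      = exp A ⊗ₖ exp B := by
  have hcomm : Commute (A ⊗ₖ (1 : Matrix p p ℝ)) ((1 : Matrix n n ℝ) ⊗ₖ B) := by
    show _ * _ = _ * _
    rw [← Matrix.mul_kronecker_mul, ← Matrix.mul_kronecker_mul, Matrix.one_mul,
      Matrix.mul_one, Matrix.one_mul, Matrix.mul_one]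
  have hc1 : Continuous (kronRight n p) :=
    LinearMap.continuous_of_finiteDimensional (kronRight n p).toLinearMap
  have hc2 : Continuous (kronLeft n p) :=
    LinearMap.continuous_of_finiteDimensional (kronLeft n p).toLinearMap
  have e1 : exp (A ⊗ₖ (1 : Matrix p p ℝ)) = exp A ⊗ₖ (1 : Matrix p p ℝ) :=
    (map_exp (kronRight n p) hc1 A).symm
  have e2 : exp ((1 : Matrix n n ℝ) ⊗ₖ B) = (1 : Matrix n n ℝ) ⊗ₖ exp B :=
    (map_exp (kronLeft n p) hc2 B).symm
  erw [exp_add_of_commute hcomm]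
  erw [e1, e2]
  rw [ ← Matrix.mul_kronecker_mul,
    Matrix.mul_one, Matrix.one_mul]

end MEAux

/-- CDF of the maximum of two independent ME-distributed random variables:
it equals the `(1, d₁ᴵ + d₂ᴵ)` entry of `e^{t(Y₁ᴵ ⊕ Y₂ᴵ)}`, and also equals
the product of the corresponding entries of `e^{t Y₁ᴵ}` and `e^{t Y₂ᴵ}`. -/
theorem cdf_max_me_distributed {Ω : Type*} [MeasureSpace Ω]
    [IsProbabilityMeasure (ℙ : Measure Ω)]
    {d₁ d₂ : ℕ}
    (x₁ : Matrix (Fin 1) (Fin (d₁ + 1)) ℝ) (Y₁ : Matrix (Fin (d₁ + 1)) (Fin (d₁ + 1)) ℝ)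
    (x₂ : Matrix (Fin 1) (Fin (d₂ + 1)) ℝ) (Y₂ : Matrix (Fin (d₂ + 1)) (Fin (d₂ + 1)) ℝ)
    (T₁ T₂ : Ω → ℝ)
    (hm₁ : Measurable T₁) (hm₂ : Measurable T₂)
    (hindep : ProbabilityTheory.IndepFun T₁ T₂ ℙ)
    (hcdf₁ : ∀ t : ℝ, 0 ≤ t → (ℙ {ω | T₁ ω ≤ t}).toReal =
      ∫ u in (0 : ℝ)..t, (x₁ * NormedSpace.exp (u • Y₁)) 0 (Fin.last d₁))
    (hcdf₂ : ∀ t : ℝ, 0 ≤ t → (ℙ {ω | T₂ ω ≤ t}).toReal =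
      ∫ u in (0 : ℝ)..t, (x₂ * NormedSpace.exp (u • Y₂)) 0 (Fin.last d₂))
    (t : ℝ) (ht : 0 ≤ t) :
    (ℙ {ω | max (T₁ ω) (T₂ ω) ≤ t}).toReal =
      NormedSpace.exp
        (t • (Matrix.fromBlocks (0 : Matrix (Fin 1) (Fin 1) ℝ) x₁ 0 Y₁ ⊗ₖ
              (1 : Matrix (Fin 1 ⊕ Fin (d₂ + 1)) (Fin 1 ⊕ Fin (d₂ + 1)) ℝ) +
            (1 : Matrix (Fin 1 ⊕ Fin (d₁ + 1)) (Fin 1 ⊕ Fin (d₁ + 1)) ℝ) ⊗ₖ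
              Matrix.fromBlocks (0 : Matrix (Fin 1) (Fin 1) ℝ) x₂ 0 Y₂))
        (Sum.inl 0, Sum.inl 0) (Sum.inr (Fin.last d₁), Sum.inr (Fin.last d₂)) ∧
    (ℙ {ω | max (T₁ ω) (T₂ ω) ≤ t}).toReal =
      NormedSpace.exp (t • Matrix.fromBlocks (0 : Matrix (Fin 1) (Fin 1) ℝ) x₁ 0 Y₁)
          (Sum.inl 0) (Sum.inr (Fin.last d₁)) *
        NormedSpace.exp (t • Matrix.fromBlocks (0 : Matrix (Fin 1) (Fin 1) ℝ) x₂ 0 Y₂)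
          (Sum.inl 0) (Sum.inr (Fin.last d₂)) := by
  have hset : {ω | max (T₁ ω) (T₂ ω) ≤ t} = T₁ ⁻¹' Set.Iic t ∩ T₂ ⁻¹' Set.Iic t := by
    ext ω; simp [max_le_iff]
  have hmul := hindep.measure_inter_preimage_eq_mul (Set.Iic t) (Set.Iic t)
      measurableSet_Iic measurableSet_Iic
  have hprob : (ℙ {ω | max (T₁ ω) (T₂ ω) ≤ t}).toReal
      = (ℙ {ω | T₁ ω ≤ t}).toReal * (ℙ {ω | T₂ ω ≤ t}).toReal := by
    rw [hset, hmul, ENNReal.toReal_mul]; rfl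
  have h2 : (ℙ {ω | max (T₁ ω) (T₂ ω) ≤ t}).toReal =
      NormedSpace.exp (t • Matrix.fromBlocks (0 : Matrix (Fin 1) (Fin 1) ℝ) x₁ 0 Y₁)
          (Sum.inl 0) (Sum.inr (Fin.last d₁)) *
        NormedSpace.exp (t • Matrix.fromBlocks (0 : Matrix (Fin 1) (Fin 1) ℝ) x₂ 0 Y₂)
          (Sum.inl 0) (Sum.inr (Fin.last d₂)) := by
    rw [hprob, hcdf₁ t ht, hcdf₂ t ht, MEAux.integral_eq, MEAux.integral_eq]
  refine ⟨?_, h2⟩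
  rw [h2]
  have hsm : t • (Matrix.fromBlocks (0 : Matrix (Fin 1) (Fin 1) ℝ) x₁ 0 Y₁ ⊗ₖ
        (1 : Matrix (Fin 1 ⊕ Fin (d₂ + 1)) (Fin 1 ⊕ Fin (d₂ + 1)) ℝ) +
      (1 : Matrix (Fin 1 ⊕ Fin (d₁ + 1)) (Fin 1 ⊕ Fin (d₁ + 1)) ℝ) ⊗ₖ
        Matrix.fromBlocks (0 : Matrix (Fin 1) (Fin 1) ℝ) x₂ 0 Y₂)
      = (t • Matrix.fromBlocks (0 : Matrix (Fin 1) (Fin 1) ℝ) x₁ 0 Y₁) ⊗ₖ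
          (1 : Matrix (Fin 1 ⊕ Fin (d₂ + 1)) (Fin 1 ⊕ Fin (d₂ + 1)) ℝ) +
        (1 : Matrix (Fin 1 ⊕ Fin (d₁ + 1)) (Fin 1 ⊕ Fin (d₁ + 1)) ℝ) ⊗ₖ
          (t • Matrix.fromBlocks (0 : Matrix (Fin 1) (Fin 1) ℝ) x₂ 0 Y₂) := by
    rw [smul_add, Matrix.smul_kronecker, Matrix.kronecker_smul]
  rw [hsm, MEAux.exp_kron_sum, Matrix.kroneckerMap_apply]
end
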